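/- If A and B are independent real-valued random variables, then for every r > 0, Q_r(A+B) ≥ Q_r(A)·Q_r(B)/2, where Q_r is the Lévy concentration function. -/
import Mathlib

open MeasureTheory ProbabilityTheory Filter ENNReal

/-- The Lévy concentration function `Q_r(X) = sup_x P(x < X ≤ x + r)`. -/
noncomputable def Qc {Ω : Type*} [MeasurableSpace Ω] (μ : Measure Ω) (X : Ω → ℝ) (r : ℝ) : ℝ≥0∞ :=
  ⨆ x : ℝ, μ {ω | x < X ω ∧ X ω ≤ x + r}

theorem stmt6 {Ω : Type*} [MeasurableSpace Ω] (μ : Measure Ω) [IsProbabilityMeasure μ]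
    (A B : Ω → ℝ) (hA : Measurable A) (hB : Measurable B) (hAB : IndepFun A B μ)
    (r : ℝ) (hr : 0 < r) :
    Qc μ A r * Qc μ B r / 2 ≤ Qc μ (fun ω => A ω + B ω) r := by
  rw [ENNReal.div_le_iff_le_mul (Or.inl (by norm_num)) (Or.inl (by norm_num))]
  rw [Qc, Qc, ENNReal.iSup_mul]
  refine iSup_le fun x => ?_
  rw [ENNReal.mul_iSup]
  refine iSup_le fun y => ?_
  have hkey : μ {ω | x < A ω ∧ A ω ≤ x + r} * μ {ω | y < B ω ∧ B ω ≤ y + r}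
      = μ ({ω | x < A ω ∧ A ω ≤ x + r} ∩ {ω | y < B ω ∧ B ω ≤ y + r}) := by
    have := hAB.measure_inter_preimage_eq_mul (Set.Ioc x (x + r)) (Set.Ioc y (y + r))
      measurableSet_Ioc measurableSet_Ioc
    simp only [Set.preimage, Set.mem_Ioc] at this
    exact this.symm
  rw [hkey]
  have hsub : ({ω | x < A ω ∧ A ω ≤ x + r} ∩ {ω | y < B ω ∧ B ω ≤ y + r})
      ⊆ {ω | x + y < A ω + B ω ∧ A ω + B ω ≤ (x + y) + r}
        ∪ {ω | (x + y + r) < A ω + B ω ∧ A ω + B ω ≤ (x + y + r) + r} := by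
    rintro ω ⟨⟨h1, h2⟩, h3, h4⟩
    by_cases h : A ω + B ω ≤ x + y + r
    · exact Or.inl ⟨by linarith, h⟩
    · exact Or.inr ⟨by linarith, by linarith⟩
  calc μ ({ω | x < A ω ∧ A ω ≤ x + r} ∩ {ω | y < B ω ∧ B ω ≤ y + r})
      ≤ μ ({ω | x + y < A ω + B ω ∧ A ω + B ω ≤ (x + y) + r}
        ∪ {ω | (x + y + r) < A ω + B ω ∧ A ω + B ω ≤ (x + y + r) + r}) := measure_mono hsub
    _ ≤ μ {ω | x + y < A ω + B ω ∧ A ω + B ω ≤ (x + y) + r}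
        + μ {ω | (x + y + r) < A ω + B ω ∧ A ω + B ω ≤ (x + y + r) + r} := measure_union_le _ _
    _ ≤ Qc μ (fun ω => A ω + B ω) r + Qc μ (fun ω => A ω + B ω) r := by
        gcongr
        · exact le_iSup (fun z => μ {ω | z < A ω + B ω ∧ A ω + B ω ≤ z + r}) (x + y)
        · exact le_iSup (fun z => μ {ω | z < A ω + B ω ∧ A ω + B ω ≤ z + r}) (x + y + r)
    _ = Qc μ (fun ω => A ω + B ω) r * 2 := by ring
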